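/- Let f be a finite partial function from ℕ to ℕ, let Ξ be a family of completions of f which blocks at width n, and let U be a 2n-branching set of extensions of f. Then there is a 2-branching set of extensions U* ⊆ U ∩ Ξ such that for every g ∈ U*, the family Ξ↾g blocks at width n (as a family of completions of g). -/

import Mathlib

/-- A partial function from ℕ to ℕ, represented via `Option`. -/
def PFn := ℕ → Option ℕ

/-- The domain of a partial function. -/
def PFn.dom (f : PFn) : Set ℕ := {x | f x ≠ none}

/-- `f` has finite domain (i.e. `f ∈ ω^{⊂ω}`). -/
def PFn.FinDom (f : PFn) : Prop := f.dom.Finite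

/-- `PExt f g` means `f ⊆ g` as partial functions. -/
def PExt (f g : PFn) : Prop := ∀ x y, f x = some y → g x = some y

/-- `Branching n f k U`: `U` is an `n`-branching set of extensions of `f` of length `k`. -/
inductive Branching (n : ℕ) : PFn → ℕ → Set PFn → Prop
  | base (f : PFn) (x : ℕ) (U : Set PFn) (hx : f x = none)
      (hmem : ∀ g ∈ U, PExt f g ∧ PFn.dom g = PFn.dom f ∪ {x})
      (hcard : U.ncard = n) : Branching n f 1 U
  | step (f : PFn) (k : ℕ) (U₀ : Set PFn) (Ug : PFn → Set PFn)
      (h₀ : Branching n f k U₀)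
      (hg : ∀ g ∈ U₀, Branching n g 1 (Ug g)) :
      Branching n f (k + 1) (⋃ g ∈ U₀, Ug g)

/-- `U` is an `n`-branching set of extensions of `f` (of some length `k ≥ 1`). -/
def IsBranching (n : ℕ) (f : PFn) (U : Set PFn) : Prop := ∃ k, 1 ≤ k ∧ Branching n f k U

/-- `Xi` is a family of completions of `f`. -/
def FamilyOfCompletions (f : PFn) (Xi : Set PFn) : Prop :=
  (∀ g ∈ Xi, PExt f g) ∧ (∀ g ∈ Xi, ∀ h, PExt f h → PExt h g → h ∈ Xi)

/-- `Xi` blocks at width `n`: every `n`-branching set of extensions of `f` meets `Xi`. -/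
def Blocks (f : PFn) (Xi : Set PFn) (n : ℕ) : Prop :=
  ∀ U, IsBranching n f U → (U ∩ Xi).Nonempty

/-- The members of `Xi` extending `g`. -/
def Restrict (Xi : Set PFn) (g : PFn) : Set PFn := {h ∈ Xi | PExt g h}

/- ### Auxiliary lemmas -/

lemma PExt.refl' (f : PFn) : PExt f f := fun _ _ h => h

lemma PExt.trans' {f g h : PFn} (h1 : PExt f g) (h2 : PExt g h) : PExt f h :=
  fun x y hx => h2 x y (h1 x y hx)

lemma branching_not_zero {n : ℕ} {p : PFn} {U : Set PFn} (h : Branching n p 0 U) : False := by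
  cases h

lemma branching_ext {n k : ℕ} {p : PFn} {U : Set PFn} (h : Branching n p k U) :
    ∀ g ∈ U, PExt p g := by
  induction h with
  | base f x U hx hmem hcard => exact fun g hg => (hmem g hg).1
  | step f k U₀ Ug h₀ hg ih₀ ihg =>
    intro g hgU
    simp only [Set.mem_iUnion] at hgU
    obtain ⟨g₀, hg₀, hgg₀⟩ := hgU
    exact (ih₀ g₀ hg₀).trans' (ihg g₀ hg₀ g hgg₀)

lemma branching_findom {n k : ℕ} {p : PFn} {U : Set PFn} (h : Branching n p k U)
    (hp : p.FinDom) : ∀ g ∈ U, PFn.FinDom g := by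
  induction h with
  | base f x U hx hmem hcard =>
    intro g hg
    have := (hmem g hg).2
    unfold PFn.FinDom
    rw [this]
    exact (hp.union (Set.finite_singleton x))
  | step f k U₀ Ug h₀ hg ih₀ ihg =>
    intro g hgU
    simp only [Set.mem_iUnion] at hgU
    obtain ⟨g₀, hg₀, hgg₀⟩ := hgU
    exact ihg g₀ hg₀ (ih₀ hp g₀ hg₀) g hgg₀

/-- A fresh input not in the domain of `h`. -/
noncomputable def fresh (h : PFn) : ℕ := sInf {x | h x = none}

lemma fresh_spec {h : PFn} (hh : h.FinDom) : h (fresh h) = none := by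
  have : {x | h x = none} = (PFn.dom h)ᶜ := by
    ext x; simp [PFn.dom]
  have hne : {x | h x = none}.Nonempty := by
    rw [this]
    exact (hh.infinite_compl).nonempty
  exact Nat.sInf_mem hne

/-- The canonical set of `n` one-point extensions of `h` at a fresh input. -/
noncomputable def oneBranch (n : ℕ) (h : PFn) : Set PFn :=
  (fun j => Function.update h (fresh h) (some j)) '' ↑(Finset.range n)

lemma oneBranch_branching (n : ℕ) {h : PFn} (hh : h.FinDom) :
    Branching n h 1 (oneBranch n h) := by
  have hfr : h (fresh h) = none := fresh_spec hh
  refine Branching.base h (fresh h) _ hfr ?_ ?_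
  · rintro g ⟨j, hj, rfl⟩
    constructor
    · intro x y hxy
      have hx : x ≠ fresh h := by
        intro h'; rw [h'] at hxy; rw [hfr] at hxy; cases hxy
      show Function.update h (fresh h) (some j) x = some y
      exact (Function.update_of_ne hx _ _).trans hxy
    · ext x
      by_cases hx : x = fresh h
      · subst hx
        have e : Function.update h (fresh h) (some j) (fresh h) = some j := Function.update_self _ _ _
        simp [PFn.dom, e, hfr]
      · have e : Function.update h (fresh h) (some j) x = h x := Function.update_of_ne hx _ _
        simp [PFn.dom, e, hx]
  · have hinj : Function.Injective (fun j : ℕ => Function.update h (fresh h) (some j)) := by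
      intro a b hab
      have h2 := congrFun hab (fresh h)
      have e1 : Function.update h (fresh h) (some a) (fresh h) = some a := Function.update_self _ _ _
      have e2 : Function.update h (fresh h) (some b) (fresh h) = some b := Function.update_self _ _ _
      simpa [e1, e2] using h2
    rw [oneBranch]
    exact (Set.ncard_image_of_injective _ hinj).trans (by rw [Set.ncard_coe_finset, Finset.card_range])

/-- Inversion for length-1 branchings. -/
lemma branching_one_inv {n : ℕ} {g : PFn} {W : Set PFn} (h : Branching n g 1 W) :
    ∃ x, g x = none ∧ (∀ q ∈ W, PExt g q ∧ PFn.dom q = PFn.dom g ∪ {x}) ∧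
      W.ncard = n := by
  cases h with
  | base f x U hx hmem hcard => exact ⟨x, hx, hmem, hcard⟩
  | step f k U₀ Ug h₀ hg => exact absurd h₀ branching_not_zero

/-- Inversion for longer branchings. -/
lemma branching_step_inv {n k : ℕ} (hk : 1 ≤ k) {g : PFn} {V : Set PFn}
    (h : Branching n g (k + 1) V) :
    ∃ (W : Set PFn) (F : PFn → Set PFn), Branching n g k W ∧
      (∀ q ∈ W, Branching n q 1 (F q)) ∧ V = ⋃ q ∈ W, F q := by
  cases h with
  | base f x U hx hmem hcard => omega
  | step f k' U₀ Ug h₀ hg => exact ⟨U₀, Ug, h₀, hg, rfl⟩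

lemma branching_pad {n k : ℕ} {p : PFn} {V : Set PFn} (hp : p.FinDom)
    (h : Branching n p k V) : ∀ k', k ≤ k' →
    ∃ V', Branching n p k' V' ∧ ∀ h' ∈ V', ∃ h₀ ∈ V, PExt h₀ h' := by
  intro k'
  induction k' with
  | zero =>
    intro hk'
    interval_cases k
    · exact absurd h branching_not_zero
  | succ m ih =>
    intro hk'
    rcases Nat.lt_or_ge k (m + 1) with hlt | hge
    · have hkm : k ≤ m := by omega
      obtain ⟨V', hV', hext⟩ := ih hkm
      refine ⟨⋃ g ∈ V', oneBranch n g, Branching.step p m V' _ hV' ?_, ?_⟩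
      · intro g hg
        exact oneBranch_branching n (branching_findom hV' hp g hg)
      · intro h' hh'
        simp only [Set.mem_iUnion] at hh'
        obtain ⟨g, hg, hh'g⟩ := hh'
        obtain ⟨h₀, hh₀, hext₀⟩ := hext g hg
        exact ⟨h₀, hh₀, hext₀.trans' (branching_ext (oneBranch_branching n
          (branching_findom hV' hp g hg)) h' hh'g)⟩
    · have : k = m + 1 := by omega
      subst this
      exact ⟨V, h, fun h' hh' => ⟨h', hh', PExt.refl' h'⟩⟩

/-- Grafting branching trees of common length onto the leaves of a branching tree with
pairwise incompatible leaves. -/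
lemma branching_graft {n : ℕ} {p : PFn} {m : ℕ} {U₀ : Set PFn}
    (h₀ : Branching n p m U₀)
    (hinc : ∀ g ∈ U₀, ∀ g' ∈ U₀, g ≠ g' → ∀ q, PExt g q → PExt g' q → False) :
    ∀ L, 1 ≤ L → ∀ V : PFn → Set PFn, (∀ g ∈ U₀, Branching n g L (V g)) →
    Branching n p (m + L) (⋃ g ∈ U₀, V g) := by
  intro L
  induction L generalizing p m U₀ with
  | zero => omega
  | succ L' ih =>
    intro _ V hV
    rcases Nat.eq_zero_or_pos L' with hL0 | hL1
    · subst hL0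
      exact Branching.step p m U₀ V h₀ hV
    · -- decompose each V g
      have hdec : ∀ g, ∃ (W : Set PFn) (F : PFn → Set PFn), g ∈ U₀ →
          Branching n g L' W ∧ (∀ h ∈ W, Branching n h 1 (F h)) ∧
          V g = ⋃ h ∈ W, F h := by
        intro g
        by_cases hg : g ∈ U₀
        · obtain ⟨W, F, h1, h2, h3⟩ := branching_step_inv hL1 (hV g hg)
          exact ⟨W, F, fun _ => ⟨h1, h2, h3⟩⟩
        · exact ⟨∅, fun _ => ∅, fun h => absurd h hg⟩
      choose W F hWF using hdec
      have hWb : ∀ g ∈ U₀, Branching n g L' (W g) := fun g hg => (hWF g hg).1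
      have hFb : ∀ g ∈ U₀, ∀ h ∈ W g, Branching n h 1 (F g h) :=
        fun g hg => (hWF g hg).2.1
      have hVeq : ∀ g ∈ U₀, V g = ⋃ h ∈ W g, F g h := fun g hg => (hWF g hg).2.2
      have hmid : Branching n p (m + L') (⋃ g ∈ U₀, W g) :=
        ih h₀ hinc hL1 W hWb
      -- choose, for each node h of the middle level, a leaf g it came from
      have hchoice : ∀ h : PFn, ∃ g : PFn, h ∈ (⋃ g ∈ U₀, W g) →
          g ∈ U₀ ∧ h ∈ W g := by
        intro h
        by_cases hh : h ∈ (⋃ g ∈ U₀, W g)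
        · simp only [Set.mem_iUnion] at hh
          obtain ⟨g, hg, hhg⟩ := hh
          exact ⟨g, fun _ => ⟨hg, hhg⟩⟩
        · exact ⟨p, fun h' => absurd h' hh⟩
      choose γ hγ using hchoice
      -- uniqueness of the originating leaf
      have huniq : ∀ g ∈ U₀, ∀ h ∈ W g, γ h = g := by
        intro g hg h hh
        by_contra hne
        have hmem : h ∈ (⋃ g ∈ U₀, W g) := by
          simp only [Set.mem_iUnion]; exact ⟨g, hg, hh⟩
        obtain ⟨hγU, hγW⟩ := hγ h hmem
        exact hinc (γ h) hγU g hg hne h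
          (branching_ext (hWb (γ h) hγU) h hγW)
          (branching_ext (hWb g hg) h hh)
      have hstep : Branching n p (m + L' + 1)
          (⋃ h ∈ (⋃ g ∈ U₀, W g), F (γ h) h) := by
        refine Branching.step p (m + L') _ _ hmid ?_
        intro h hh
        obtain ⟨hγU, hγW⟩ := hγ h hh
        exact hFb (γ h) hγU h hγW
      have heq : (⋃ h ∈ (⋃ g ∈ U₀, W g), F (γ h) h) = ⋃ g ∈ U₀, V g := by
        ext q
        simp only [Set.mem_iUnion]
        constructor
        · rintro ⟨h, ⟨g, hg, hhg⟩, hq⟩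
          rw [huniq g hg h hhg] at hq
          refine ⟨g, hg, ?_⟩
          rw [hVeq g hg]
          simp only [Set.mem_iUnion]
          exact ⟨h, hhg, hq⟩
        · rintro ⟨g, hg, hq⟩
          rw [hVeq g hg] at hq
          simp only [Set.mem_iUnion] at hq
          obtain ⟨h, hh, hq⟩ := hq
          refine ⟨h, ⟨g, hg, hh⟩, ?_⟩
          rwa [huniq g hg h hh]
      have : m + (L' + 1) = m + L' + 1 := by omega
      rw [this, ← heq]
      exact hstep

lemma family_restrict {p g : PFn} {Xi : Set PFn} (hXi : FamilyOfCompletions p Xi)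
    (hpg : PExt p g) : FamilyOfCompletions g (Restrict Xi g) := by
  constructor
  · exact fun h hh => hh.2
  · rintro h ⟨hhXi, hgh⟩ h' hgh' hh'h
    exact ⟨hXi.2 h hhXi h' (hpg.trans' hgh') hh'h, hgh'⟩

lemma restrict_restrict {g g' : PFn} {Xi : Set PFn} (hgg' : PExt g g') :
    Restrict (Restrict Xi g) g' = Restrict Xi g' := by
  ext h
  constructor
  · rintro ⟨⟨h1, h2⟩, h3⟩; exact ⟨h1, h3⟩
  · rintro ⟨h1, h2⟩; exact ⟨⟨h1, hgg'.trans' h2⟩, h2⟩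

/-- Key one-level lemma: among the `2n` children, at least two are good. -/
lemma key_level {n : ℕ} (hn : 1 ≤ n) {p : PFn} (hp : p.FinDom) {Xi : Set PFn}
    (hfam : FamilyOfCompletions p Xi) (hb : Blocks p Xi n) {W : Set PFn}
    (hW : Branching (2 * n) p 1 W) :
    ∃ g₁ ∈ W, ∃ g₂ ∈ W, g₁ ≠ g₂ ∧
      Blocks g₁ (Restrict Xi g₁) n ∧ Blocks g₂ (Restrict Xi g₂) n := by
  -- extract the data of the one-level branching
  obtain ⟨x, hx, hmem, hcard⟩ := branching_one_inv hW
  have hWfin : W.Finite := by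
    by_contra hinf
    rw [Set.Infinite.ncard hinf] at hcard
    omega
  -- incompatibility of distinct elements of W
  have hincW : ∀ g ∈ W, ∀ g' ∈ W, g ≠ g' → ∀ q, PExt g q → PExt g' q → False := by
    intro g hg g' hg' hne q hgq hg'q
    apply hne
    funext y
    by_cases hy : y = x
    · rw [hy]
      have h1 : g x ≠ none := by
        have : x ∈ PFn.dom g := by rw [(hmem g hg).2]; right; rfl
        exact this
      have h2 : g' x ≠ none := by
        have : x ∈ PFn.dom g' := by rw [(hmem g' hg').2]; right; rfl
        exact this
      obtain ⟨a, ha⟩ := Option.ne_none_iff_exists'.mp h1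
      obtain ⟨a', ha'⟩ := Option.ne_none_iff_exists'.mp h2
      have := (hgq x a ha).symm.trans (hg'q x a' ha')
      rw [ha, ha', Option.some_inj.mpr (Option.some_inj.mp this)]
    · by_cases hyp : p y = none
      · have h1 : g y = none := by
          by_contra h'
          have : y ∈ PFn.dom g := h'
          rw [(hmem g hg).2] at this
          rcases this with h'' | h''
          · exact h'' hyp
          · exact hy h''
        have h2 : g' y = none := by
          by_contra h'
          have : y ∈ PFn.dom g' := h'
          rw [(hmem g' hg').2] at this
          rcases this with h'' | h''
          · exact h'' hyp
          · exact hy h''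
        rw [h1, h2]
      · obtain ⟨a, ha⟩ := Option.ne_none_iff_exists'.mp hyp
        rw [(hmem g hg).1 y a ha, (hmem g' hg').1 y a ha]
  -- the set of good children
  set G := {g ∈ W | Blocks g (Restrict Xi g) n} with hG
  have hGsub : G ⊆ W := fun g hg => hg.1
  have hGfin : G.Finite := hWfin.subset hGsub
  have hGcard : 2 ≤ G.ncard := by
    by_contra hsmall
    push_neg at hsmall
    -- then the bad set has at least n elements
    have hBcard : n ≤ (W \ G).ncard := by
      have := Set.ncard_diff hGsub hGfin
      omega
    obtain ⟨S, hSsub, hScard⟩ := Set.exists_subset_card_eq hBcard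
    have hSW : S ⊆ W := fun g hg => (hSsub hg).1
    have hSfin : S.Finite := hWfin.subset hSW
    -- each element of S is bad: it has a branching tree avoiding Xi
    have hbad : ∀ g, ∃ (V : Set PFn) (L : ℕ), g ∈ S →
        1 ≤ L ∧ Branching n g L V ∧ V ∩ Restrict Xi g = ∅ := by
      intro g
      by_cases hg : g ∈ S
      · have hnb : ¬ Blocks g (Restrict Xi g) n :=
          fun hbg => (hSsub hg).2 ⟨(hSsub hg).1, hbg⟩
        rw [Blocks] at hnb
        push_neg at hnb
        obtain ⟨V, ⟨L, hL, hbr⟩, hempty⟩ := hnb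
        exact ⟨V, L, fun _ => ⟨hL, hbr,
          hempty⟩⟩
      · exact ⟨∅, 1, fun h => absurd h hg⟩
    choose V L hVL using hbad
    -- pad all trees to a common length M
    set M := max 1 (hSfin.toFinset.sup L) with hM
    have hM1 : 1 ≤ M := le_max_left _ _
    have hpadex : ∀ g, ∃ V' : Set PFn, g ∈ S →
        Branching n g M V' ∧ ∀ h' ∈ V', ∃ h₀ ∈ V g, PExt h₀ h' := by
      intro g
      by_cases hg : g ∈ S
      · have hgfin : g.FinDom := branching_findom hW hp g (hSW hg)
        have hLM : L g ≤ M := le_max_of_le_right (Finset.le_sup (hSfin.mem_toFinset.mpr hg))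
        obtain ⟨V', hV', hext⟩ := branching_pad hgfin (hVL g hg).2.1 M hLM
        exact ⟨V', fun _ => ⟨hV', hext⟩⟩
      · exact ⟨∅, fun h => absurd h hg⟩
    choose V' hV' using hpadex
    -- S is an n-branching set of extensions of p of length 1
    have hSbr : Branching n p 1 S :=
      Branching.base p x S hx (fun g hg => hmem g (hSW hg)) hScard
    have hSinc : ∀ g ∈ S, ∀ g' ∈ S, g ≠ g' → ∀ q, PExt g q → PExt g' q → False :=
      fun g hg g' hg' => hincW g (hSW hg) g' (hSW hg')
    -- graft
    have hbig : Branching n p (1 + M) (⋃ g ∈ S, V' g) :=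
      branching_graft hSbr hSinc M hM1 V' (fun g hg => (hV' g hg).1)
    obtain ⟨h, hhU, hhXi⟩ := hb _ ⟨1 + M, by omega, hbig⟩
    simp only [Set.mem_iUnion] at hhU
    obtain ⟨g, hgS, hhV'⟩ := hhU
    obtain ⟨h₀, hh₀V, hh₀h⟩ := (hV' g hgS).2 h hhV'
    -- h₀ ∈ Xi by downward closure
    have hpg : PExt p g := (hmem g (hSW hgS)).1
    have hgh₀ : PExt g h₀ := branching_ext (hVL g hgS).2.1 h₀ hh₀V
    have hh₀Xi : h₀ ∈ Xi := hfam.2 h hhXi h₀ (hpg.trans' hgh₀) hh₀h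
    have : h₀ ∈ V g ∩ Restrict Xi g := ⟨hh₀V, hh₀Xi, hgh₀⟩
    rw [(hVL g hgS).2.2] at this
    exact this
  -- extract two distinct good elements
  obtain ⟨g₁, hg₁, g₂, hg₂, hne⟩ := (Set.one_lt_ncard hGfin).mp hGcard
  exact ⟨g₁, hg₁.1, g₂, hg₂.1, hne, hg₁.2, hg₂.2⟩

/-- Main induction on the branching tree. -/
lemma main_ind {n : ℕ} (hn : 1 ≤ n) {p : PFn} {k : ℕ} {U : Set PFn}
    (hU : Branching (2 * n) p k U) :
    ∀ Xi : Set PFn, p.FinDom → FamilyOfCompletions p Xi → Blocks p Xi n →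
    ∃ Ustar : Set PFn, Ustar ⊆ U ∧ Branching 2 p k Ustar ∧
      ∀ h ∈ Ustar, Blocks h (Restrict Xi h) n := by
  induction hU with
  | base f x W hx hmem hcard =>
    intro Xi hp hfam hb
    have hW : Branching (2 * n) f 1 W := Branching.base f x W hx hmem hcard
    obtain ⟨g₁, hg₁, g₂, hg₂, hne, hb₁, hb₂⟩ := key_level hn hp hfam hb hW
    refine ⟨{g₁, g₂}, ?_, ?_, ?_⟩
    · intro g hg; rcases hg with rfl | rfl
      · exact hg₁
      · exact hg₂
    · refine Branching.base f x _ hx ?_ ?_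
      · intro g hg; rcases hg with rfl | rfl
        · exact hmem g hg₁
        · exact hmem g hg₂
      · rw [Set.ncard_pair hne]
    · intro h hh; rcases hh with rfl | rfl
      · exact hb₁
      · exact hb₂
  | step f k U₀ Ug h₀ hg ih₀ ihg =>
    intro Xi hp hfam hb
    obtain ⟨U₀star, hsub, hbr, hgood⟩ := ih₀ Xi hp hfam hb
    -- for each good node, pick two good children
    have hchild : ∀ g, ∃ P : Set PFn, g ∈ U₀star →
        P ⊆ Ug g ∧ Branching 2 g 1 P ∧ ∀ h ∈ P, Blocks h (Restrict Xi h) n := by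
      intro g
      by_cases hgm : g ∈ U₀star
      · have hgU₀ : g ∈ U₀ := hsub hgm
        have hgfin : g.FinDom := branching_findom h₀ hp g hgU₀
        have hpg : PExt f g := branching_ext h₀ g hgU₀
        have hfam' : FamilyOfCompletions g (Restrict Xi g) := family_restrict hfam hpg
        have hb' : Blocks g (Restrict Xi g) n := hgood g hgm
        obtain ⟨g₁, hg₁, g₂, hg₂, hne, hb₁, hb₂⟩ :=
          key_level hn hgfin hfam' hb' (hg g hgU₀)
        obtain ⟨x, hx, hmem, -⟩ := branching_one_inv (hg g hgU₀)
        refine ⟨{g₁, g₂}, fun _ => ⟨?_, ?_, ?_⟩⟩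
        · intro h hh; rcases hh with rfl | rfl
          · exact hg₁
          · exact hg₂
        · refine Branching.base g x _ hx ?_ ?_
          · intro h hh; rcases hh with rfl | rfl
            · exact hmem h hg₁
            · exact hmem h hg₂
          · rw [Set.ncard_pair hne]
        · intro h hh
          have hggi : PExt g h := by
            rcases hh with rfl | rfl
            · exact (hmem h hg₁).1
            · exact (hmem h hg₂).1
          rcases hh with rfl | rfl
          · rw [← restrict_restrict hggi]; exact hb₁
          · rw [← restrict_restrict hggi]; exact hb₂
      · exact ⟨∅, fun h => absurd h hgm⟩
    choose P hP using hchild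
    refine ⟨⋃ g ∈ U₀star, P g, ?_, ?_, ?_⟩
    · intro h hh
      simp only [Set.mem_iUnion] at hh
      obtain ⟨g, hgm, hhP⟩ := hh
      simp only [Set.mem_iUnion]
      exact ⟨g, hsub hgm, (hP g hgm).1 hhP⟩
    · exact Branching.step f k U₀star P hbr (fun g hgm => (hP g hgm).2.1)
    · intro h hh
      simp only [Set.mem_iUnion] at hh
      obtain ⟨g, hgm, hhP⟩ := hh
      exact (hP g hgm).2.2 h hhP

theorem blocking_extension (f : PFn) (hf : f.FinDom) (n : ℕ) (hn : 1 ≤ n)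
    (Xi : Set PFn) (hXi : FamilyOfCompletions f Xi) (hb : Blocks f Xi n)
    (k : ℕ) (hk : 1 ≤ k) (U : Set PFn) (hU : Branching (2 * n) f k U) :
    ∃ Ustar : Set PFn, Ustar ⊆ U ∩ Xi ∧ IsBranching 2 f Ustar ∧
      ∀ g ∈ Ustar, Blocks g (Restrict Xi g) n := by
  obtain ⟨Ustar, hsub, hbr, hgood⟩ := main_ind hn hU Xi hf hXi hb
  refine ⟨Ustar, ?_, ⟨k, hk, hbr⟩, hgood⟩
  intro g hg
  refine ⟨hsub hg, ?_⟩
  -- g is good, hence blocks, hence Xi restricted to g is nonempty, hence g ∈ Xi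
  have hgfin : g.FinDom := branching_findom hbr hf g hg
  have hfg : PExt f g := branching_ext hbr g hg
  have hbl := hgood g hg
  obtain ⟨q, hqV, hqXi, hgq⟩ := hbl (oneBranch n g) ⟨1, le_refl 1, oneBranch_branching n hgfin⟩
  exact hXi.2 q hqXi g hfg hgq
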